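/- arXiv:1007.3039 — 2 statements merged into one kernel-verified Lean document; each statement's English description precedes it below -/
import Mathlib

section
/- Let ψ ∈ L²(ℝ²) be compactly supported and let c > 0. Then there exists a constant C > 0, depending only on c and supp ψ, such that for every integer j ≥ 0, every k ∈ ℤ with |k| ≤ ⌈2^{j/2}⌉, and every p ∈ ℤ², the number of m ∈ ℤ² such that supp ψ_{j,k,m} ∩ Q_{j,p} ≠ ∅ is at most C·2^{j/2}. -/
noncomputable section

open MeasureTheory Real Set

/-- The plane `ℝ²`. -/
abbrev R2 := ℝ × ℝ

/-- The unit square `[0,1]²`. -/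
def unitSq : Set R2 := Set.Icc (0:ℝ) 1 ×ˢ Set.Icc (0:ℝ) 1

/-- The shearlet `ψ_{j,k,m}(x) = 2^{3j/4} ψ(S_k A_{2^j} x − c m)`, where
`A_{2^j} = diag(2^j, 2^{j/2})` and `S_k = [[1,k],[0,1]]`. -/
def shearlet (ψ : R2 → ℂ) (c : ℝ) (j k : ℤ) (m : ℤ × ℤ) : R2 → ℂ :=
  fun x => (((2:ℝ) ^ (3 * (j:ℝ) / 4) : ℝ) : ℂ) *
    ψ ((2:ℝ) ^ (j:ℝ) * x.1 + (k : ℝ) * (2:ℝ) ^ ((j:ℝ)/2) * x.2 - c * m.1,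
       (2:ℝ) ^ ((j:ℝ)/2) * x.2 - c * m.2)

/-- The `L²(ℝ²)` inner product `⟨f,g⟩ = ∫ f ḡ`. -/
def ip (f g : R2 → ℂ) : ℂ := ∫ x : R2, f x * (starRingEnd ℂ) (g x)

/-- The dyadic cube `Q_{j,p} = [−2^{−j/2}, 2^{−j/2}]² + 2^{−j/2} p`. -/
def Qjp (j : ℤ) (p : ℤ × ℤ) : Set R2 :=
  {x : R2 | |x.1 - (2:ℝ) ^ (-(j:ℝ)/2) * p.1| ≤ (2:ℝ) ^ (-(j:ℝ)/2) ∧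
            |x.2 - (2:ℝ) ^ (-(j:ℝ)/2) * p.2| ≤ (2:ℝ) ^ (-(j:ℝ)/2)}

/-- The set of integers within distance `L` of `t` is finite, of cardinality at most
`2L + 1`. -/
lemma int_interval_card (t L : ℝ) (hL : 0 ≤ L) :
    {n : ℤ | |(n:ℝ) - t| ≤ L}.Finite ∧ ({n : ℤ | |(n:ℝ) - t| ≤ L}.ncard : ℝ) ≤ 2*L + 1 := by
  have hsub : {n : ℤ | |(n:ℝ) - t| ≤ L} ⊆ Set.Icc ⌈t - L⌉ ⌊t + L⌋ := by
    intro n hn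
    simp only [Set.mem_setOf_eq, abs_le] at hn
    exact ⟨Int.ceil_le.mpr (by linarith [hn.1]), Int.le_floor.mpr (by linarith [hn.2])⟩
  have hfin : (Set.Icc ⌈t-L⌉ ⌊t+L⌋ : Set ℤ).Finite := Set.finite_Icc _ _
  refine ⟨hfin.subset hsub, ?_⟩
  have h1 : {n : ℤ | |(n:ℝ) - t| ≤ L}.ncard ≤ (Set.Icc ⌈t-L⌉ ⌊t+L⌋ : Set ℤ).ncard :=
    Set.ncard_le_ncard hsub hfin
  have h2 : (Set.Icc ⌈t-L⌉ ⌊t+L⌋ : Set ℤ).ncard = (⌊t+L⌋ + 1 - ⌈t-L⌉).toNat := by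
    rw [show (Set.Icc ⌈t-L⌉ ⌊t+L⌋ : Set ℤ) = ↑(Finset.Icc ⌈t-L⌉ ⌊t+L⌋) from
      (Finset.coe_Icc _ _).symm, Set.ncard_coe_finset, Int.card_Icc]
  have h3 : ((⌊t+L⌋ + 1 - ⌈t-L⌉).toNat : ℝ) ≤ 2*L + 1 := by
    rcases le_or_gt (⌊t+L⌋ + 1 - ⌈t-L⌉) 0 with h | h
    · rw [Int.toNat_of_nonpos h]; push_cast; linarith
    · have heq : ((⌊t+L⌋ + 1 - ⌈t-L⌉).toNat : ℤ) = ⌊t+L⌋ + 1 - ⌈t-L⌉ := Int.toNat_of_nonneg h.le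
      have heq' : ((⌊t+L⌋ + 1 - ⌈t-L⌉).toNat : ℝ) = ((⌊t+L⌋:ℝ) + 1 - ⌈t-L⌉) := by
        exact_mod_cast heq
      rw [heq']
      have hb := Int.floor_le (t+L)
      have ha := Int.le_ceil (t-L)
      linarith
  calc ({n : ℤ | |(n:ℝ) - t| ≤ L}.ncard : ℝ) ≤ ((Set.Icc ⌈t-L⌉ ⌊t+L⌋ : Set ℤ).ncard : ℝ) := by
        exact_mod_cast h1
    _ ≤ 2*L + 1 := by rw [h2]; exact h3

lemma ncard_prod' (s t : Set ℤ) : (s ×ˢ t).ncard = s.ncard * t.ncard := by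
  rw [← Nat.card_coe_set_eq, ← Nat.card_coe_set_eq, ← Nat.card_coe_set_eq,
    Nat.card_congr (Equiv.Set.prod s t), Nat.card_prod]

/-- The topological support of a shearlet is contained in the preimage of the
topological support of `ψ` under the corresponding affine map. -/
lemma tsupport_shearlet_subset (ψ : R2 → ℂ) (c : ℝ) (j k : ℤ) (m : ℤ × ℤ) :
    tsupport (shearlet ψ c j k m) ⊆
      {x : R2 | ((2:ℝ) ^ (j:ℝ) * x.1 + (k : ℝ) * (2:ℝ) ^ ((j:ℝ)/2) * x.2 - c * m.1,
       (2:ℝ) ^ ((j:ℝ)/2) * x.2 - c * m.2) ∈ tsupport ψ} := by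
  apply closure_minimal
  · intro x hx
    have hx' : shearlet ψ c j k m x ≠ 0 := hx
    exact subset_closure (right_ne_zero_of_mul hx')
  · exact IsClosed.preimage (by fun_prop) isClosed_closure

/-- If the support of `ψ_{j,k,m}` meets `Q_{j,p}`, then both coordinates of `m`
lie in explicit intervals. -/
theorem key_bounds
    (c : ℝ) (hc : 0 < c) (ψ : R2 → ℂ) (R : ℝ) (hR1 : 1 ≤ R)
    (hRsub : tsupport ψ ⊆ Metric.closedBall 0 R)
    (j k : ℤ) (p : ℤ × ℤ) (hj : 0 ≤ j) (hk : |k| ≤ ⌈(2:ℝ) ^ ((j:ℝ)/2)⌉)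
    (m : ℤ × ℤ) (hm : (tsupport (shearlet ψ c j k m) ∩ Qjp j p).Nonempty) :
    |(m.1:ℝ) - ((2:ℝ) ^ ((j:ℝ)/2) * p.1 + k * p.2)/c| ≤ (3+R) * (2:ℝ) ^ ((j:ℝ)/2) / c ∧
    |(m.2:ℝ) - (p.2:ℝ)/c| ≤ (1+R)/c := by
  obtain ⟨x, hxT, hxQ⟩ := hm
  set a : ℝ := (2:ℝ) ^ ((j:ℝ)/2) with ha_def
  have ha0 : 0 < a := Real.rpow_pos_of_pos two_pos _
  have ha1 : 1 ≤ a := Real.one_le_rpow one_le_two (by positivity)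
  have hainv : (2:ℝ) ^ (-(j:ℝ)/2) = a⁻¹ := by
    rw [ha_def, ← Real.rpow_neg (by norm_num : (0:ℝ) ≤ 2)]
    ring_nf
  have haa : (2:ℝ) ^ (j:ℝ) = a * a := by
    rw [ha_def, ← Real.rpow_add two_pos]
    ring_nf
  -- membership in support of ψ
  have hy := tsupport_shearlet_subset ψ c j k m hxT
  simp only [Set.mem_setOf_eq] at hy
  have hy' := hRsub hy
  rw [Metric.mem_closedBall, dist_zero_right] at hy'
  have hy1 : |(2:ℝ) ^ (j:ℝ) * x.1 + (k : ℝ) * a * x.2 - c * m.1| ≤ R := by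
    have h := (norm_fst_le ((2:ℝ) ^ (j:ℝ) * x.1 + (k : ℝ) * (2:ℝ) ^ ((j:ℝ)/2) * x.2 - c * m.1,
       (2:ℝ) ^ ((j:ℝ)/2) * x.2 - c * m.2)).trans hy'
    simpa [Real.norm_eq_abs] using h
  have hy2 : |a * x.2 - c * m.2| ≤ R := by
    have h := (norm_snd_le ((2:ℝ) ^ (j:ℝ) * x.1 + (k : ℝ) * (2:ℝ) ^ ((j:ℝ)/2) * x.2 - c * m.1,
       (2:ℝ) ^ ((j:ℝ)/2) * x.2 - c * m.2)).trans hy'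
    simpa [Real.norm_eq_abs] using h
  -- cube bounds
  obtain ⟨hq1, hq2⟩ := hxQ
  rw [hainv] at hq1 hq2
  have hax1 : |a * x.1 - p.1| ≤ 1 := by
    have e : a * x.1 - (p.1:ℝ) = a * (x.1 - a⁻¹ * p.1) := by field_simp
    calc |a * x.1 - (p.1:ℝ)| = a * |x.1 - a⁻¹ * p.1| := by rw [e, abs_mul, abs_of_pos ha0]
      _ ≤ a * a⁻¹ := mul_le_mul_of_nonneg_left hq1 ha0.le
      _ = 1 := mul_inv_cancel₀ ha0.ne'
  have hax2 : |a * x.2 - p.2| ≤ 1 := by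
    have e : a * x.2 - (p.2:ℝ) = a * (x.2 - a⁻¹ * p.2) := by field_simp
    calc |a * x.2 - (p.2:ℝ)| = a * |x.2 - a⁻¹ * p.2| := by rw [e, abs_mul, abs_of_pos ha0]
      _ ≤ a * a⁻¹ := mul_le_mul_of_nonneg_left hq2 ha0.le
      _ = 1 := mul_inv_cancel₀ ha0.ne'
  -- |k| bound
  have hkre : |(k:ℝ)| ≤ 2 * a := by
    have h1 : ((|k| : ℤ) : ℝ) ≤ (⌈a⌉ : ℝ) := by exact_mod_cast hk
    have h2 : (⌈a⌉ : ℝ) ≤ a + 1 := by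
      have := Int.ceil_lt_add_one a
      linarith
    rw [Int.cast_abs] at h1
    linarith
  constructor
  · -- first coordinate
    have hcm : |c * m.1 - (a * p.1 + k * p.2)| ≤ (3+R) * a := by
      have e1 : c * m.1 - (a * p.1 + (k:ℝ) * p.2) =
          (a * (a * x.1 - p.1)) + ((k:ℝ) * (a * x.2 - p.2))
            + (-((2:ℝ) ^ (j:ℝ) * x.1 + (k : ℝ) * a * x.2 - c * m.1)) := by
        rw [haa]; ring
      calc |c * m.1 - (a * p.1 + (k:ℝ) * p.2)|
          ≤ |a * (a * x.1 - p.1)| + |(k:ℝ) * (a * x.2 - p.2)|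
            + |-((2:ℝ) ^ (j:ℝ) * x.1 + (k : ℝ) * a * x.2 - c * m.1)| := by
            rw [e1]; exact abs_add_three _ _ _
        _ ≤ a * 1 + (2*a) * 1 + R := by
            rw [abs_mul, abs_mul, abs_of_pos ha0, abs_neg]
            gcongr
        _ ≤ (3+R) * a := by nlinarith
    have e2 : (m.1:ℝ) - (a * p.1 + k * p.2)/c = (c * m.1 - (a * p.1 + k * p.2))/c := by
      field_simp
    rw [e2, abs_div, abs_of_pos hc]
    exact div_le_div_of_nonneg_right hcm hc.le
  · -- second coordinate
    have hcm : |c * m.2 - (p.2:ℝ)| ≤ 1 + R := by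
      have e1 : c * m.2 - (p.2:ℝ) = (a * x.2 - p.2) + (-(a * x.2 - c * m.2)) := by ring
      calc |c * m.2 - (p.2:ℝ)| ≤ |a * x.2 - (p.2:ℝ)| + |-(a * x.2 - c * m.2)| := by
            rw [e1]; exact abs_add_le _ _
        _ ≤ 1 + R := by rw [abs_neg]; exact add_le_add hax2 hy2
    have e2 : (m.2:ℝ) - (p.2:ℝ)/c = (c * m.2 - p.2)/c := by field_simp
    rw [e2, abs_div, abs_of_pos hc]
    exact div_le_div_of_nonneg_right hcm hc.le

/-- **Lemma (counting shearlets meeting a dyadic cube).** Let `ψ ∈ L²(ℝ²)` be compactly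
supported and `c > 0`. Then there is `C > 0` (depending only on `c` and `supp ψ`) such
that for every `j ≥ 0`, `|k| ≤ ⌈2^{j/2}⌉` and `p ∈ ℤ²`, the number of `m ∈ ℤ²` with
`supp ψ_{j,k,m} ∩ Q_{j,p} ≠ ∅` is at most `C · 2^{j/2}`. -/
theorem counting_shearlets_meeting_cube
    (c : ℝ) (hc : 0 < c) (ψ : R2 → ℂ)
    (hψs : HasCompactSupport ψ) (hψ2 : MemLp ψ 2 volume) :
    ∃ C > 0, ∀ (j k : ℤ) (p : ℤ × ℤ), 0 ≤ j → |k| ≤ ⌈(2:ℝ) ^ ((j:ℝ)/2)⌉ →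
      {m : ℤ × ℤ | (tsupport (shearlet ψ c j k m) ∩ Qjp j p).Nonempty}.Finite ∧
      (({m : ℤ × ℤ | (tsupport (shearlet ψ c j k m) ∩ Qjp j p).Nonempty}.ncard : ℝ)
        ≤ C * (2:ℝ) ^ ((j:ℝ)/2)) := by
  obtain ⟨R₀, hR₀⟩ := (hψs.isBounded).subset_closedBall 0
  set R : ℝ := max R₀ 1 with hR_def
  have hR1 : 1 ≤ R := le_max_right _ _
  have hRsub : tsupport ψ ⊆ Metric.closedBall 0 R :=
    hR₀.trans (Metric.closedBall_subset_closedBall (le_max_left _ _))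
  have hu : 0 ≤ (3+R)/c := div_nonneg (by linarith) hc.le
  have hv : 0 ≤ (1+R)/c := div_nonneg (by linarith) hc.le
  refine ⟨(2*((3+R)/c) + 1) * (2*((1+R)/c) + 1), by nlinarith, ?_⟩
  intro j k p hj hk
  set a : ℝ := (2:ℝ) ^ ((j:ℝ)/2) with ha_def
  have ha0 : 0 < a := Real.rpow_pos_of_pos two_pos _
  have ha1 : 1 ≤ a := Real.one_le_rpow one_le_two (by positivity)
  set S1 : Set ℤ := {n : ℤ | |(n:ℝ) - (a * p.1 + k * p.2)/c| ≤ (3+R) * a / c} with hS1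
  set S2 : Set ℤ := {n : ℤ | |(n:ℝ) - (p.2:ℝ)/c| ≤ (1+R)/c} with hS2
  have h1 := int_interval_card ((a * p.1 + k * p.2)/c) ((3+R) * a / c)
    (div_nonneg (mul_nonneg (by linarith) ha0.le) hc.le)
  have h2 := int_interval_card ((p.2:ℝ)/c) ((1+R)/c) hv
  have hsub : {m : ℤ × ℤ | (tsupport (shearlet ψ c j k m) ∩ Qjp j p).Nonempty} ⊆ S1 ×ˢ S2 := by
    intro m hm
    have := key_bounds c hc ψ R hR1 hRsub j k p hj hk m hm
    exact ⟨this.1, this.2⟩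
  have hfinP : (S1 ×ˢ S2).Finite := h1.1.prod h2.1
  refine ⟨hfinP.subset hsub, ?_⟩
  have hle : {m : ℤ × ℤ | (tsupport (shearlet ψ c j k m) ∩ Qjp j p).Nonempty}.ncard
      ≤ S1.ncard * S2.ncard := by
    rw [← ncard_prod']
    exact Set.ncard_le_ncard hsub hfinP
  have hb : (({m : ℤ × ℤ | (tsupport (shearlet ψ c j k m) ∩ Qjp j p).Nonempty}.ncard : ℝ))
      ≤ (2*((3+R) * a / c)+1) * (2*((1+R)/c)+1) := by
    calc (({m : ℤ × ℤ | (tsupport (shearlet ψ c j k m) ∩ Qjp j p).Nonempty}.ncard : ℝ))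
        ≤ (S1.ncard : ℝ) * (S2.ncard : ℝ) := by exact_mod_cast hle
      _ ≤ (2*((3+R) * a / c)+1) * (2*((1+R)/c)+1) :=
          mul_le_mul h1.2 h2.2 (by positivity) (by
            have := h1.2
            have : (0:ℝ) ≤ (S1.ncard : ℝ) := by positivity
            linarith [h1.2])
  refine hb.trans ?_
  have hE : (3+R) * a / c = ((3+R)/c) * a := by ring
  rw [hE]
  nlinarith [mul_nonneg hv (sub_nonneg.mpr ha1), mul_nonneg hu (sub_nonneg.mpr ha1)]
end
end

section
/- Let ψ ∈ L¹(ℝ²) ∩ L²(ℝ²) be compactly supported with ‖ψ‖_{L¹} ≤ 1, let c > 0, let f ∈ L^∞(ℝ²) with ‖f‖_∞ ≤ 1, and let F ⊂ ℝ² be a finite set of points. Then there exists C > 0, depending only on c, supp ψ and the cardinality of F, such that for every 0 < ε < 1 the number of indices λ = (j,k,m) with j ≥ 0, |k| ≤ ⌈2^{j/2}⌉, m ∈ ℤ², supp ψ_λ ∩ F ≠ ∅ and |⟨f, ψ_λ⟩| > ε is at most C·ε^{−2/3}. -/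
noncomputable section

open MeasureTheory Real Set
open scoped ENNReal NNReal

/-- Valid horizontal shearlet indices `λ = (j,k,m)`: `j ≥ 0` and `|k| ≤ ⌈2^{j/2}⌉`. -/
def validH (l : ℤ × ℤ × (ℤ × ℤ)) : Prop :=
  0 ≤ l.1 ∧ |l.2.1| ≤ ⌈(2:ℝ) ^ ((l.1:ℝ)/2)⌉

/-! ### Auxiliary lemmas -/

/-- The linear part of the shearlet change of variables. -/
def Lmap (a kb b : ℝ) : R2 →ₗ[ℝ] R2 where
  toFun x := (a * x.1 + kb * x.2, b * x.2)
  map_add' x y := by simp [Prod.ext_iff]; constructor <;> ring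
  map_smul' r x := by simp [Prod.ext_iff, smul_eq_mul]; constructor <;> ring

lemma Lmap_det (a kb b : ℝ) : LinearMap.det (Lmap a kb b) = a * b := by
  rw [← LinearMap.det_toMatrix (Module.Basis.finTwoProd ℝ), Matrix.det_fin_two]
  simp [LinearMap.toMatrix_apply, Lmap, Module.Basis.finTwoProd_zero, Module.Basis.finTwoProd_one]

lemma map_T (a kb b : ℝ) (ha : 0 < a) (hb : 0 < b) (v w : ℝ) :
    Measure.map (fun x : R2 => ((a * x.1 + kb * x.2 + v, b * x.2 + w) : R2)) volume
      = ENNReal.ofReal ((a*b)⁻¹) • volume := by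
  have hdet : LinearMap.det (Lmap a kb b) ≠ 0 := by
    rw [Lmap_det]; positivity
  have h1 : (fun x : R2 => ((a * x.1 + kb * x.2 + v, b * x.2 + w) : R2))
      = (fun z : R2 => z + (v, w)) ∘ (Lmap a kb b) := by
    funext x; simp [Lmap, Prod.ext_iff]
  rw [h1, ← Measure.map_map (by fun_prop) (Lmap a kb b).continuous_of_finiteDimensional.measurable,
    Measure.map_linearMap_addHaar_eq_smul_addHaar volume hdet, Measure.map_smul,
    map_add_right_eq_self volume ((v,w):R2), Lmap_det, abs_of_pos (by positivity)]

section coeff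
variable (c : ℝ) (ψ : R2 → ℂ) (j k : ℤ) (m : ℤ × ℤ)

/-- The affine change of variables underlying `shearlet`. -/
def Tmap : R2 → R2 := fun x =>
  ((2:ℝ) ^ (j:ℝ) * x.1 + ((k:ℝ) * (2:ℝ) ^ ((j:ℝ)/2)) * x.2 + (-(c * m.1)),
   (2:ℝ) ^ ((j:ℝ)/2) * x.2 + (-(c * m.2)))

lemma shearlet_eq : shearlet ψ c j k m
    = fun x => (((2:ℝ) ^ (3 * (j:ℝ) / 4) : ℝ) : ℂ) * ψ (Tmap c j k m x) := by
  funext x; simp [shearlet, Tmap, sub_eq_add_neg, mul_assoc]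

lemma map_Tmap : Measure.map (Tmap c j k m) volume
    = ENNReal.ofReal (((2:ℝ) ^ (j:ℝ) * (2:ℝ) ^ ((j:ℝ)/2))⁻¹) • volume :=
  map_T _ _ _ (by positivity) (by positivity) _ _

variable (hψ1 : Integrable ψ)
include hψ1

lemma psi_asm : AEStronglyMeasurable ψ (Measure.map (Tmap c j k m) volume) := by
  rw [map_Tmap]
  exact hψ1.aestronglyMeasurable.mono_ac Measure.smul_absolutelyContinuous

omit hψ1 in
lemma Tmap_meas : Measurable (Tmap c j k m) := by unfold Tmap; fun_prop

lemma comp_integrable : Integrable (fun x => ψ (Tmap c j k m x)) := by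
  have h : Integrable ψ (Measure.map (Tmap c j k m) volume) := by
    rw [map_Tmap]
    exact hψ1.smul_measure ENNReal.ofReal_ne_top
  exact (integrable_map_measure (psi_asm c ψ j k m hψ1) (Tmap_meas c j k m).aemeasurable).mp h

lemma shearlet_integrable : Integrable (shearlet ψ c j k m) := by
  rw [shearlet_eq]
  exact (comp_integrable c ψ j k m hψ1).const_mul _

lemma integral_norm_comp : ∫ x, ‖ψ (Tmap c j k m x)‖
    = ((2:ℝ) ^ (j:ℝ) * (2:ℝ) ^ ((j:ℝ)/2))⁻¹ * ∫ x, ‖ψ x‖ := by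
  rw [← integral_map (Tmap_meas c j k m).aemeasurable (psi_asm c ψ j k m hψ1).norm,
    map_Tmap, integral_smul_measure, ENNReal.toReal_ofReal (by positivity), smul_eq_mul]

lemma integral_norm_shearlet : ∫ x, ‖shearlet ψ c j k m x‖
    = (2:ℝ) ^ (3 * (j:ℝ) / 4) * (((2:ℝ) ^ (j:ℝ) * (2:ℝ) ^ ((j:ℝ)/2))⁻¹ * ∫ x, ‖ψ x‖) := by
  rw [shearlet_eq, ← integral_norm_comp c ψ j k m hψ1, ← integral_const_mul]
  congr 1; funext x
  have h : ‖(((2:ℝ) ^ (3 * (j:ℝ) / 4) : ℝ) : ℂ)‖ = (2:ℝ) ^ (3 * (j:ℝ) / 4) := by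
    rw [Complex.norm_real, Real.norm_eq_abs, abs_of_nonneg (by positivity)]
  rw [norm_mul, h]

lemma coeff_bound (hψnorm : (∫ x : R2, ‖ψ x‖) ≤ 1)
    (f : R2 → ℂ) (hfm : MemLp f ⊤ volume) (hf1 : (eLpNorm f ⊤ volume).toReal ≤ 1) :
    ‖ip f (shearlet ψ c j k m)‖ ≤ (2:ℝ) ^ (-(3 * (j:ℝ)) / 4) := by
  have hfin : eLpNormEssSup f volume ≠ ⊤ := by
    rw [← eLpNorm_exponent_top (f := f)]; exact hfm.2.ne
  have hfb : ∀ᵐ x : R2 ∂volume, ‖f x‖ ≤ 1 := by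
    filter_upwards [ae_le_eLpNormEssSup (f := f) (μ := volume)] with x hx
    calc ‖f x‖ = ((‖f x‖₊ : ℝ≥0∞)).toReal := by simp
    _ ≤ (eLpNormEssSup f volume).toReal := ENNReal.toReal_mono hfin hx
    _ ≤ 1 := by rwa [eLpNorm_exponent_top] at hf1
  have hgint : Integrable (fun x => ‖shearlet ψ c j k m x‖) :=
    (shearlet_integrable c ψ j k m hψ1).norm
  have h1 : ‖ip f (shearlet ψ c j k m)‖
      ≤ ∫ x, ‖f x * (starRingEnd ℂ) (shearlet ψ c j k m x)‖ :=
    norm_integral_le_integral_norm _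
  have h2 : ∫ x, ‖f x * (starRingEnd ℂ) (shearlet ψ c j k m x)‖
      ≤ ∫ x, ‖shearlet ψ c j k m x‖ := by
    refine integral_mono_of_nonneg (Filter.Eventually.of_forall fun x => norm_nonneg _) hgint ?_
    filter_upwards [hfb] with x hx
    rw [norm_mul, RCLike.norm_conj]
    nlinarith [norm_nonneg (shearlet ψ c j k m x), norm_nonneg (f x)]
  have h3 : ∫ x, ‖shearlet ψ c j k m x‖ ≤ (2:ℝ) ^ (-(3 * (j:ℝ)) / 4) := by
    rw [integral_norm_shearlet c ψ j k m hψ1]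
    have hab : (2:ℝ) ^ (j:ℝ) * (2:ℝ) ^ ((j:ℝ)/2) = (2:ℝ) ^ (3 * (j:ℝ) / 2) := by
      rw [← Real.rpow_add two_pos]; congr 1; ring
    calc (2:ℝ) ^ (3 * (j:ℝ) / 4) * (((2:ℝ) ^ (j:ℝ) * (2:ℝ) ^ ((j:ℝ)/2))⁻¹ * ∫ x, ‖ψ x‖)
        ≤ (2:ℝ) ^ (3 * (j:ℝ) / 4) * (((2:ℝ) ^ (j:ℝ) * (2:ℝ) ^ ((j:ℝ)/2))⁻¹ * 1) := by
          gcongr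
    _ = (2:ℝ) ^ (-(3 * (j:ℝ)) / 4) := by
          rw [mul_one, hab, ← Real.rpow_neg two_pos.le, ← Real.rpow_add two_pos]
          congr 1; ring
  linarith
end coeff

lemma Tmap_continuous (c : ℝ) (j k : ℤ) (m : ℤ × ℤ) : Continuous (Tmap c j k m) := by
  unfold Tmap; fun_prop

set_option maxHeartbeats 1000000

lemma tsupport_shearlet_subset_s10 (c : ℝ) (ψ : R2 → ℂ) (j k : ℤ) (m : ℤ × ℤ) :
    tsupport (shearlet ψ c j k m) ⊆ (Tmap c j k m) ⁻¹' (tsupport ψ) := by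
  apply closure_minimal
  · intro x hx
    simp only [Function.mem_support, shearlet_eq, ne_eq] at hx
    have : ψ (Tmap c j k m x) ≠ 0 := by
      intro h0; apply hx; rw [h0, mul_zero]
    exact subset_closure this
  · exact (isClosed_closure).preimage (Tmap_continuous c j k m)

/-- **Lemma (corner-point count, Case 2b-1).** Let `ψ ∈ L¹ ∩ L²` be compactly supported
with `‖ψ‖_{L¹} ≤ 1`, `c > 0`, and let `F` be a finite set of (corner) points. Then there
is `C > 0`, depending only on `c`, `supp ψ` and `|F|`, such that for every `f ∈ L^∞` with
`‖f‖_∞ ≤ 1` and every `0 < ε < 1`, the number of indices `λ = (j,k,m)` with `j ≥ 0`,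
`|k| ≤ ⌈2^{j/2}⌉`, `supp ψ_λ ∩ F ≠ ∅` and `|⟨f,ψ_λ⟩| > ε` is at most `C · ε^{−2/3}`. -/
theorem corner_point_coefficient_count
    (c : ℝ) (hc : 0 < c) (ψ : R2 → ℂ)
    (hψs : HasCompactSupport ψ) (hψ1 : Integrable ψ) (hψ2 : MemLp ψ 2 volume)
    (hψnorm : (∫ x : R2, ‖ψ x‖) ≤ 1) (nF : ℕ) :
    ∃ C > 0, ∀ F : Finset R2, F.card = nF →
      ∀ f : R2 → ℂ, MemLp f ⊤ volume → (eLpNorm f ⊤ volume).toReal ≤ 1 →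
      ∀ ε : ℝ, 0 < ε → ε < 1 →
        {l : ℤ × ℤ × (ℤ × ℤ) | validH l ∧
          (∃ y ∈ F, y ∈ tsupport (shearlet ψ c l.1 l.2.1 l.2.2)) ∧
          ε < ‖ip f (shearlet ψ c l.1 l.2.1 l.2.2)‖}.Finite ∧
        (({l : ℤ × ℤ × (ℤ × ℤ) | validH l ∧
            (∃ y ∈ F, y ∈ tsupport (shearlet ψ c l.1 l.2.1 l.2.2)) ∧
            ε < ‖ip f (shearlet ψ c l.1 l.2.1 l.2.2)‖}.ncard : ℝ)
          ≤ C * ε ^ (-(2:ℝ)/3)) := by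
  classical
  obtain ⟨R₀, hR₀⟩ := hψs.isBounded.subset_closedBall (0 : R2)
  set R : ℝ := max R₀ 0 with hRdef
  have hR0 : 0 ≤ R := le_max_right _ _
  have hR : tsupport ψ ⊆ Metric.closedBall 0 R :=
    hR₀.trans (Metric.closedBall_subset_closedBall (le_max_left _ _))
  set M : ℕ := ⌈2 * R / c⌉₊ + 1 with hMdef
  have hM1R : 2 * R / c + 1 ≤ (M : ℝ) := by
    have := Nat.le_ceil (2 * R / c)
    push_cast [hMdef]; linarith
  refine ⟨100 * ((nF : ℝ) + 1) * (M : ℝ)^2, by positivity, ?_⟩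
  intro F hFcard f hfm hf1 ε hε hε1
  -- the square root of 2
  set r : ℝ := (2:ℝ) ^ ((1:ℝ)/2) with hrdef
  have hr0 : 0 < r := by positivity
  have hr2 : r * r = 2 := by
    rw [hrdef, ← Real.rpow_add two_pos]; norm_num
  have hr1 : 1 < r := by nlinarith
  have hr32 : r ≤ 3/2 := by nlinarith
  have hr43 : 4/3 ≤ r := by nlinarith
  have hrn : ∀ n : ℕ, (2:ℝ) ^ ((n:ℝ)/2) = r ^ n := by
    intro n
    rw [hrdef, ← Real.rpow_natCast ((2:ℝ) ^ ((1:ℝ)/2)) n, ← Real.rpow_mul two_pos.le]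
    congr 1; ring
  -- the maximal scale
  set L : ℝ := (4/3) * Real.logb 2 ε⁻¹ with hLdef
  have hL0 : 0 ≤ L := by
    have h1 : (1:ℝ) ≤ ε⁻¹ := one_le_inv_iff₀.mpr ⟨hε, hε1.le⟩
    have := Real.logb_nonneg (by norm_num : (1:ℝ) < 2) h1
    rw [hLdef]; positivity
  set N : ℕ := ⌊L⌋₊ + 1 with hNdef
  have hεinv : (2:ℝ) ^ ((1:ℝ)/2 * L) = ε ^ (-(2:ℝ)/3) := by
    have h1 : (1:ℝ)/2 * L = Real.logb 2 ε⁻¹ * (2/3) := by rw [hLdef]; ring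
    rw [h1, Real.rpow_mul two_pos.le, Real.rpow_logb two_pos (by norm_num) (inv_pos.mpr hε),
      Real.inv_rpow hε.le, ← Real.rpow_neg hε.le]
    norm_num
  have hX0 : 0 < ε ^ (-(2:ℝ)/3) := Real.rpow_pos_of_pos hε _
  -- the candidate index sets
  set Kc : ℕ → ℤ := fun n => ⌈(2:ℝ) ^ ((n:ℝ)/2)⌉ with hKcdef
  set u : R2 → ℕ → ℤ → ℝ :=
    fun y n k => (2:ℝ)^((n:ℝ)) * y.1 + (k:ℝ) * (2:ℝ)^((n:ℝ)/2) * y.2 with hudef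
  set v : R2 → ℕ → ℝ := fun y n => (2:ℝ)^((n:ℝ)/2) * y.2 with hvdef
  set M1 : R2 → ℕ → ℤ → Finset ℤ :=
    fun y n k => Finset.Icc ⌈(u y n k - R)/c⌉ ⌊(u y n k + R)/c⌋ with hM1def
  set M2 : R2 → ℕ → Finset ℤ :=
    fun y n => Finset.Icc ⌈(v y n - R)/c⌉ ⌊(v y n + R)/c⌋ with hM2def
  set B : Finset (ℤ × ℤ × (ℤ × ℤ)) := F.biUnion fun y => (Finset.range N).biUnion fun n =>
    (Finset.Icc (-(Kc n)) (Kc n)).biUnion fun k =>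
      ({((n:ℕ):ℤ)} ×ˢ (({k} : Finset ℤ) ×ˢ (M1 y n k ×ˢ M2 y n))) with hBdef
  -- the bad set is contained in B
  have key : ∀ l : ℤ × ℤ × (ℤ × ℤ), (validH l ∧
      (∃ y ∈ F, y ∈ tsupport (shearlet ψ c l.1 l.2.1 l.2.2)) ∧
      ε < ‖ip f (shearlet ψ c l.1 l.2.1 l.2.2)‖) → l ∈ B := by
    rintro ⟨j, k, m⟩ ⟨⟨hj0, hk⟩, ⟨y, hyF, hy⟩, hip⟩
    simp only at hj0 hk hip hy ⊢
    set n : ℕ := j.toNat with hndef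
    have hn : ((n : ℕ) : ℤ) = j := Int.toNat_of_nonneg hj0
    have hjr : (j:ℝ) = (n:ℝ) := by exact_mod_cast (congrArg (fun z : ℤ => (z:ℝ)) hn).symm
    -- bound on the scale
    have hcb := coeff_bound c ψ j k m hψ1 hψnorm f hfm hf1
    have hlt : ε < (2:ℝ) ^ (-(3*(j:ℝ))/4) := lt_of_lt_of_le hip hcb
    have hjL : (j:ℝ) < L := by
      have h2 := Real.logb_lt_logb (by norm_num : (1:ℝ) < 2) hε hlt
      rw [Real.logb_rpow two_pos (by norm_num)] at h2
      have h3 : Real.logb 2 ε⁻¹ = - Real.logb 2 ε := Real.logb_inv _ _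
      rw [hLdef, h3]; linarith
    have hnN : n ∈ Finset.range N := by
      rw [Finset.mem_range, hNdef]
      exact Nat.lt_succ_of_le (Nat.le_floor (by rw [← hjr] at *; exact hjL.le))
    -- bound on the shear
    have hkI : k ∈ Finset.Icc (-(Kc n)) (Kc n) := by
      rw [Finset.mem_Icc]
      have h4 := abs_le.mp hk
      rw [hjr] at h4
      exact h4
    -- bound on the translation
    have hT := tsupport_shearlet_subset_s10 c ψ j k m hy
    rw [Set.mem_preimage] at hT
    have hTB := hR hT
    rw [Metric.mem_closedBall, dist_zero_right] at hTB
    have hfst := (norm_fst_le (Tmap c j k m y)).trans hTB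
    have hsnd := (norm_snd_le (Tmap c j k m y)).trans hTB
    simp only [Tmap, Real.norm_eq_abs] at hfst hsnd
    have hfst' := abs_le.mp hfst
    have hsnd' := abs_le.mp hsnd
    have hueq : u y n k = (2:ℝ) ^ (j:ℝ) * y.1 + ((k:ℝ) * (2:ℝ) ^ ((j:ℝ)/2)) * y.2 := by
      simp only [hudef]
      rw [hjr]
    have hveq : v y n = (2:ℝ) ^ ((j:ℝ)/2) * y.2 := by
      simp only [hvdef]
      rw [hjr]
    have hm1 : m.1 ∈ M1 y n k := by
      rw [hM1def]
      simp only [Finset.mem_Icc]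
      constructor
      · rw [Int.ceil_le, div_le_iff₀ hc]
        have := hfst'.2
        rw [← hueq] at this
        linarith
      · rw [Int.le_floor, le_div_iff₀ hc]
        have := hfst'.1
        rw [← hueq] at this
        linarith
    have hm2 : m.2 ∈ M2 y n := by
      rw [hM2def]
      simp only [Finset.mem_Icc]
      constructor
      · rw [Int.ceil_le, div_le_iff₀ hc]
        have := hsnd'.2
        rw [← hveq] at this
        linarith
      · rw [Int.le_floor, le_div_iff₀ hc]
        have := hsnd'.1
        rw [← hveq] at this
        linarith
    rw [hBdef]
    refine Finset.mem_biUnion.mpr ⟨y, hyF, Finset.mem_biUnion.mpr ⟨n, hnN,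
      Finset.mem_biUnion.mpr ⟨k, hkI, ?_⟩⟩⟩
    simp only [Finset.mem_product, Finset.mem_singleton]
    exact ⟨hn.symm, trivial, hm1, hm2⟩
  have hsub : {l : ℤ × ℤ × (ℤ × ℤ) | validH l ∧
      (∃ y ∈ F, y ∈ tsupport (shearlet ψ c l.1 l.2.1 l.2.2)) ∧
      ε < ‖ip f (shearlet ψ c l.1 l.2.1 l.2.2)‖} ⊆ (B : Set (ℤ × ℤ × (ℤ × ℤ))) := by
    intro l hl; exact key l hl
  refine ⟨Set.Finite.subset B.finite_toSet hsub, ?_⟩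
  -- cardinality bounds
  have hM1card : ∀ y n k, (M1 y n k).card ≤ M := by
    intro y n k
    rw [hM1def]
    simp only [Int.card_Icc]
    rw [Int.toNat_le]
    have h1 : ((⌊(u y n k + R)/c⌋ : ℤ):ℝ) ≤ (u y n k + R)/c := Int.floor_le _
    have h2 : (u y n k - R)/c ≤ ((⌈(u y n k - R)/c⌉:ℤ):ℝ) := Int.le_ceil _
    have h3 : (u y n k + R)/c - (u y n k - R)/c = 2*R/c := by field_simp; ring
    have : ((⌊(u y n k + R)/c⌋ + 1 - ⌈(u y n k - R)/c⌉ : ℤ) : ℝ) ≤ ((M:ℤ):ℝ) := by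
      push_cast
      push_cast at hM1R
      linarith
    exact_mod_cast this
  have hM2card : ∀ y n, (M2 y n).card ≤ M := by
    intro y n
    rw [hM2def]
    simp only [Int.card_Icc]
    rw [Int.toNat_le]
    have h1 : ((⌊(v y n + R)/c⌋ : ℤ):ℝ) ≤ (v y n + R)/c := Int.floor_le _
    have h2 : (v y n - R)/c ≤ ((⌈(v y n - R)/c⌉:ℤ):ℝ) := Int.le_ceil _
    have h3 : (v y n + R)/c - (v y n - R)/c = 2*R/c := by field_simp; ring
    have : ((⌊(v y n + R)/c⌋ + 1 - ⌈(v y n - R)/c⌉ : ℤ) : ℝ) ≤ ((M:ℤ):ℝ) := by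
      push_cast
      push_cast at hM1R
      linarith
    exact_mod_cast this
  have hKcard : ∀ n : ℕ, ((Finset.Icc (-(Kc n)) (Kc n)).card : ℝ) ≤ 5 * r ^ n := by
    intro n
    have hrn1 : (1:ℝ) ≤ r ^ n := one_le_pow₀ hr1.le
    have hKlow : (1:ℤ) ≤ Kc n := by
      rw [hKcdef]
      have : (1:ℝ) ≤ (2:ℝ) ^ ((n:ℝ)/2) := by rw [hrn]; exact hrn1
      exact Int.le_ceil_iff.mpr (by push_cast; linarith)
    have hKup : ((Kc n : ℤ):ℝ) < (2:ℝ) ^ ((n:ℝ)/2) + 1 := by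
      rw [hKcdef]; exact Int.ceil_lt_add_one _
    rw [Int.card_Icc]
    have hnn : (0:ℤ) ≤ Kc n + 1 - (-(Kc n)) := by omega
    have hcast : (((Kc n + 1 - (-(Kc n))).toNat : ℕ) : ℝ) = ((Kc n + 1 - (-(Kc n)) : ℤ) : ℝ) := by
      exact_mod_cast congrArg (fun z : ℤ => (z:ℝ)) (Int.toNat_of_nonneg hnn)
    rw [hcast]
    push_cast
    rw [hrn] at hKup
    push_cast at hKup
    linarith
  -- sum over scales
  have hgeom : ∑ n ∈ Finset.range N, r ^ n ≤ 3 * r ^ N := by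
    rw [geom_sum_eq hr1.ne']
    rw [div_le_iff₀ (by linarith)]
    have hpow : (0:ℝ) ≤ r ^ N := pow_nonneg hr0.le N
    nlinarith
  have hrN : r ^ N ≤ (3/2) * ε ^ (-(2:ℝ)/3) := by
    have h1 : r ^ (⌊L⌋₊ : ℕ) ≤ ε ^ (-(2:ℝ)/3) := by
      have h2 : r ^ (⌊L⌋₊ : ℕ) = r ^ ((⌊L⌋₊ : ℕ):ℝ) := (Real.rpow_natCast r _).symm
      have h3 : r ^ (((⌊L⌋₊ : ℕ)):ℝ) ≤ r ^ L :=
        Real.rpow_le_rpow_of_exponent_le hr1.le (Nat.floor_le hL0)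
      have h4 : r ^ L = (2:ℝ) ^ ((1:ℝ)/2 * L) := by
        rw [hrdef, ← Real.rpow_mul two_pos.le]
      rw [h2]
      exact h3.trans_eq (by rw [h4, hεinv])
    calc r ^ N = r * r ^ (⌊L⌋₊ : ℕ) := by rw [hNdef, pow_succ]; ring
    _ ≤ (3/2) * ε ^ (-(2:ℝ)/3) := by
        apply mul_le_mul hr32 h1 (pow_nonneg hr0.le _) (by norm_num)
  -- the cardinality of B
  have hBy : ∀ y : R2, (((Finset.range N).biUnion fun n =>
      (Finset.Icc (-(Kc n)) (Kc n)).biUnion fun k =>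
        ({((n:ℕ):ℤ)} ×ˢ (({k} : Finset ℤ) ×ˢ (M1 y n k ×ˢ M2 y n)))).card : ℕ)
      ≤ ∑ n ∈ Finset.range N, (Finset.Icc (-(Kc n)) (Kc n)).card * (M * M) := by
    intro y
    refine (Finset.card_biUnion_le).trans (Finset.sum_le_sum fun n _ => ?_)
    refine (Finset.card_biUnion_le).trans ?_
    have hkk : ∀ k ∈ Finset.Icc (-(Kc n)) (Kc n),
        (({((n:ℕ):ℤ)} ×ˢ (({k} : Finset ℤ) ×ˢ (M1 y n k ×ˢ M2 y n))).card) ≤ M * M := by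
      intro k _
      rw [Finset.card_product, Finset.card_product, Finset.card_product,
        Finset.card_singleton, Finset.card_singleton]
      simpa using Nat.mul_le_mul (hM1card y n k) (hM2card y n)
    calc ∑ k ∈ Finset.Icc (-(Kc n)) (Kc n),
          (({((n:ℕ):ℤ)} ×ˢ (({k} : Finset ℤ) ×ˢ (M1 y n k ×ˢ M2 y n))).card)
        ≤ ∑ _k ∈ Finset.Icc (-(Kc n)) (Kc n), M * M := Finset.sum_le_sum hkk
    _ = (Finset.Icc (-(Kc n)) (Kc n)).card * (M * M) := by
        rw [Finset.sum_const, smul_eq_mul]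
  have hBcard : (B.card : ℝ) ≤ (nF : ℝ) *
      ((∑ n ∈ Finset.range N, ((Finset.Icc (-(Kc n)) (Kc n)).card : ℝ)) * ((M:ℝ) * M)) := by
    have h1 : B.card ≤ F.card * (∑ n ∈ Finset.range N,
        (Finset.Icc (-(Kc n)) (Kc n)).card * (M * M)) := by
      rw [hBdef]
      refine (Finset.card_biUnion_le).trans ?_
      calc ∑ y ∈ F, (((Finset.range N).biUnion fun n =>
            (Finset.Icc (-(Kc n)) (Kc n)).biUnion fun k =>
              ({((n:ℕ):ℤ)} ×ˢ (({k} : Finset ℤ) ×ˢ (M1 y n k ×ˢ M2 y n)))).card)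
          ≤ ∑ _y ∈ F, ∑ n ∈ Finset.range N,
              (Finset.Icc (-(Kc n)) (Kc n)).card * (M * M) :=
            Finset.sum_le_sum fun y _ => hBy y
      _ = F.card * (∑ n ∈ Finset.range N,
            (Finset.Icc (-(Kc n)) (Kc n)).card * (M * M)) := by
          rw [Finset.sum_const, smul_eq_mul]
    have h2 : (B.card : ℝ) ≤ (F.card : ℝ) * (∑ n ∈ Finset.range N,
        ((Finset.Icc (-(Kc n)) (Kc n)).card : ℝ) * ((M:ℝ) * M)) := by
      exact_mod_cast h1
    rw [hFcard] at h2
    rw [Finset.sum_mul]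
    exact h2
  -- conclusion
  have hsumK : ∑ n ∈ Finset.range N, ((Finset.Icc (-(Kc n)) (Kc n)).card : ℝ)
      ≤ 5 * (3 * r ^ N) := by
    calc ∑ n ∈ Finset.range N, ((Finset.Icc (-(Kc n)) (Kc n)).card : ℝ)
        ≤ ∑ n ∈ Finset.range N, 5 * r ^ n := Finset.sum_le_sum fun n _ => hKcard n
    _ = 5 * ∑ n ∈ Finset.range N, r ^ n := by rw [Finset.mul_sum]
    _ ≤ 5 * (3 * r ^ N) := by linarith [hgeom]
  have hncard : (({l : ℤ × ℤ × (ℤ × ℤ) | validH l ∧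
      (∃ y ∈ F, y ∈ tsupport (shearlet ψ c l.1 l.2.1 l.2.2)) ∧
      ε < ‖ip f (shearlet ψ c l.1 l.2.1 l.2.2)‖}.ncard : ℝ)) ≤ (B.card : ℝ) := by
    have := Set.ncard_le_ncard hsub B.finite_toSet
    rw [Set.ncard_coe_finset] at this
    exact_mod_cast this
  have hMpos : (0:ℝ) ≤ (M:ℝ) := Nat.cast_nonneg _
  calc (({l : ℤ × ℤ × (ℤ × ℤ) | validH l ∧
      (∃ y ∈ F, y ∈ tsupport (shearlet ψ c l.1 l.2.1 l.2.2)) ∧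
      ε < ‖ip f (shearlet ψ c l.1 l.2.1 l.2.2)‖}.ncard : ℝ))
      ≤ (B.card : ℝ) := hncard
  _ ≤ (nF : ℝ) * ((∑ n ∈ Finset.range N, ((Finset.Icc (-(Kc n)) (Kc n)).card : ℝ))
        * ((M:ℝ) * M)) := hBcard
  _ ≤ (nF : ℝ) * ((5 * (3 * ((3/2) * ε ^ (-(2:ℝ)/3)))) * ((M:ℝ) * M)) := by
      have hsum2 : ∑ n ∈ Finset.range N, ((Finset.Icc (-(Kc n)) (Kc n)).card : ℝ)
          ≤ 5 * (3 * ((3/2) * ε ^ (-(2:ℝ)/3))) := by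
        calc ∑ n ∈ Finset.range N, ((Finset.Icc (-(Kc n)) (Kc n)).card : ℝ)
            ≤ 5 * (3 * r ^ N) := hsumK
        _ ≤ 5 * (3 * ((3/2) * ε ^ (-(2:ℝ)/3))) := by linarith [hrN]
      have h5 := mul_le_mul_of_nonneg_right hsum2 (mul_nonneg hMpos hMpos)
      exact mul_le_mul_of_nonneg_left h5 (Nat.cast_nonneg nF)
  _ = ((45/2) * (nF : ℝ)) * ((M:ℝ)^2 * ε ^ (-(2:ℝ)/3)) := by ring
  _ ≤ (100 * ((nF : ℝ) + 1)) * ((M:ℝ)^2 * ε ^ (-(2:ℝ)/3)) := by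
      have h1 : (0:ℝ) ≤ (nF:ℝ) := Nat.cast_nonneg _
      have key2 : (45/2) * (nF:ℝ) ≤ 100 * ((nF:ℝ)+1) := by linarith
      exact mul_le_mul_of_nonneg_right key2 (by positivity)
  _ = 100 * ((nF : ℝ) + 1) * (M : ℝ)^2 * ε ^ (-(2:ℝ)/3) := by ring
end
end
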